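/- Let (Ω, P) be a probability space, let R : Ω → ℝ be a random variable uniformly distributed on [0,1), let g : ℝ → ℝ≥0 be a measurable function, and let s ∈ ℝ. Then the random variable ω ↦ Σ_{i∈ℤ} g(i + R(ω)) has the same distribution as the random variable ω ↦ Σ_{i∈ℤ} g(i + R(ω) + s), where the sums take values in [0, ∞]. -/
import Mathlib


open MeasureTheory Real

/-- Key lemma: for a ℤ-periodic measurable set `B` and `t ∈ [0,1)`, the measure
of `(·+t)⁻¹ B` inside `[0,1)` equals that of `B` inside `[0,1)`. -/
lemma periodic_set_translate_volume (B : Set ℝ) (hB : MeasurableSet B)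
    (hBper : ∀ x : ℝ, x + 1 ∈ B ↔ x ∈ B) (t : ℝ) (ht0 : 0 ≤ t) (ht1 : t < 1) :
    volume ((fun x => x + t) ⁻¹' B ∩ Set.Ico (0:ℝ) 1) = volume (B ∩ Set.Ico (0:ℝ) 1) := by
  set C : Set ℝ := (fun x => x + t) ⁻¹' B with hC
  have hCmeas : MeasurableSet C := hB.preimage (measurable_add_const t)
  have h1 : C ∩ Set.Ico 0 (1 - t) = (fun x => x + t) ⁻¹' (B ∩ Set.Ico t 1) := by
    ext x
    simp only [hC, Set.mem_inter_iff, Set.mem_preimage, Set.mem_Ico]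
    constructor
    · rintro ⟨hb, h0, h1⟩; exact ⟨hb, by linarith, by linarith⟩
    · rintro ⟨hb, h0, h1⟩; exact ⟨hb, ⟨by linarith, by linarith⟩⟩
  have h2 : C ∩ Set.Ico (1 - t) 1 = (fun x => x + (t - 1)) ⁻¹' (B ∩ Set.Ico 0 t) := by
    ext x
    simp only [hC, Set.mem_inter_iff, Set.mem_preimage, Set.mem_Ico]
    constructor
    · rintro ⟨hb, h0, h1⟩
      refine ⟨?_, by linarith, by linarith⟩
      have := (hBper (x + (t - 1))).mp (by rw [show x + (t-1) + 1 = x + t by ring]; exact hb)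
      exact this
    · rintro ⟨hb, h0, h1⟩
      refine ⟨?_, ⟨by linarith, by linarith⟩⟩
      have := (hBper (x + (t - 1))).mpr hb
      rw [show x + (t-1) + 1 = x + t by ring] at this
      exact this
  have hsplitC : C ∩ Set.Ico (0:ℝ) 1 = (C ∩ Set.Ico 0 (1 - t)) ∪ (C ∩ Set.Ico (1 - t) 1) := by
    rw [← Set.inter_union_distrib_left, Set.Ico_union_Ico_eq_Ico (by linarith) (by linarith)]
  have hsplitB : B ∩ Set.Ico (0:ℝ) 1 = (B ∩ Set.Ico 0 t) ∪ (B ∩ Set.Ico t 1) := by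
    rw [← Set.inter_union_distrib_left, Set.Ico_union_Ico_eq_Ico (by linarith) (by linarith)]
  have hdC : Disjoint (C ∩ Set.Ico 0 (1 - t)) (C ∩ Set.Ico (1 - t) 1) :=
    (Set.Ico_disjoint_Ico_same).mono Set.inter_subset_right
      Set.inter_subset_right
  have hdB : Disjoint (B ∩ Set.Ico 0 t) (B ∩ Set.Ico t 1) :=
    (Set.Ico_disjoint_Ico_same).mono Set.inter_subset_right
      Set.inter_subset_right
  rw [hsplitC, hsplitB,
    measure_union hdC (hCmeas.inter measurableSet_Ico),
    measure_union hdB (hB.inter measurableSet_Ico), h1, h2]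
  rw [measure_preimage_add_right volume t (B ∩ Set.Ico t 1),
    measure_preimage_add_right volume (t - 1) (B ∩ Set.Ico 0 t)]
  exact add_comm _ _

/-- Shift-invariance in distribution of sums Σ_{i∈ℤ} g(i + R) when R is uniform on [0,1). -/
theorem shift_invariance_uniform_offset {Ω : Type*} [MeasurableSpace Ω] (P : Measure Ω)
    [IsProbabilityMeasure P]
    (R : Ω → ℝ) (hR : Measurable R)
    (hunif : Measure.map R P = volume.restrict (Set.Ico (0:ℝ) 1))
    (g : ℝ → NNReal) (hg : Measurable g) (s : ℝ) :
    Measure.map (fun ω => ∑' i : ℤ, (g ((i:ℝ) + R ω) : ENNReal)) P =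
      Measure.map (fun ω => ∑' i : ℤ, (g ((i:ℝ) + R ω + s) : ENNReal)) P := by
  set F : ℝ → ENNReal := fun x => ∑' i : ℤ, (g ((i:ℝ) + x) : ENNReal) with hF
  have hFmeas : Measurable F := by
    apply Measurable.ennreal_tsum
    intro i
    exact (hg.comp (measurable_const.add measurable_id)).coe_nnreal_ennreal
  have hper : ∀ (n : ℤ) (x : ℝ), F (x + n) = F x := by
    intro n x
    have h := (Equiv.addRight n).tsum_eq (fun i : ℤ => (g ((i:ℝ) + x) : ENNReal))
    rw [hF]
    simp only
    rw [← h]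
    congr 1
    ext i
    simp only [Equiv.coe_addRight]
    push_cast
    ring_nf
  -- rewrite both sides as pushforwards of F through the uniform measure
  have e1 : (fun ω => ∑' i : ℤ, (g ((i:ℝ) + R ω) : ENNReal)) = F ∘ R := rfl
  have e2 : (fun ω => ∑' i : ℤ, (g ((i:ℝ) + R ω + s) : ENNReal))
      = (fun x => F (x + s)) ∘ R := by
    funext ω
    simp only [Function.comp_apply, hF]
    congr 1
    ext i
    ring_nf
  rw [e1, e2, ← Measure.map_map hFmeas hR,
    ← Measure.map_map (hFmeas.comp' (measurable_add_const s)) hR, hunif]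
  -- replace s by its fractional part
  set t : ℝ := Int.fract s with htdef
  have hFs : (fun x : ℝ => F (x + s)) = fun x => F (x + t) := by
    funext x
    have : x + s = (x + t) + (⌊s⌋ : ℝ) := by
      rw [htdef, Int.fract]; ring
    rw [this, hper ⌊s⌋ (x + t)]
  rw [hFs]
  have ht0 : 0 ≤ t := Int.fract_nonneg s
  have ht1 : t < 1 := Int.fract_lt_one s
  -- prove equality of pushforwards
  refine Measure.ext fun A hA => ?_
  rw [Measure.map_apply hFmeas hA,
    Measure.map_apply (hFmeas.comp' (measurable_add_const t)) hA]
  have hpre : (fun x : ℝ => F (x + t)) ⁻¹' A = (fun x => x + t) ⁻¹' (F ⁻¹' A) := rfl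
  rw [hpre, Measure.restrict_apply (hFmeas hA),
    Measure.restrict_apply ((hFmeas hA).preimage (measurable_add_const t))]
  have hBper : ∀ x : ℝ, x + 1 ∈ F ⁻¹' A ↔ x ∈ F ⁻¹' A := by
    intro x
    have := hper 1 x
    simp only [Int.cast_one] at this
    simp [Set.mem_preimage, this]
  exact (periodic_set_translate_volume (F ⁻¹' A) (hFmeas hA) hBper t ht0 ht1).symm
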